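/- Let ψ₁,…,ψ₄ be the generators of A(S_{θ'}^7) and form the 4×2 matrix Ψ with columns |ψ₁⟩ = (ψ₁, ψ₂, ψ₃, ψ₄)^t and |ψ₂⟩ = (−ψ₂*, ψ₁*, −ψ₄*, ψ₃*)^t. Then Ψ*Ψ = 1₂, and hence p := ΨΨ* is a self-adjoint idempotent in M₄(A(S_{θ'}^7)): p² = p = p*. -/
import Mathlib


open scoped Matrix

/-- For the 4×2 matrix `Ψ` with columns `|ψ₁⟩ = (ψ₁,ψ₂,ψ₃,ψ₄)ᵗ` and
`|ψ₂⟩ = (−ψ₂*,ψ₁*,−ψ₄*,ψ₃*)ᵗ` one has `Ψ*Ψ = 1₂`, hence `p = ΨΨ*` is a self-adjoint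
idempotent in `M₄(A(S_{θ'}^7))`. -/
theorem stmt_14
    (A : Type*) [Ring A] [Algebra ℂ A] [StarRing A] [StarModule ℂ A]
    (lam mu : ℂ) (hmusq : mu ^ 2 = lam) (hmuabs : mu * (starRingEnd ℂ) mu = 1)
    (ψ : Fin 4 → A)
    (lam' : Fin 4 → Fin 4 → ℂ)
    (hlam' : lam' = fun a b =>
      !![(1 : ℂ), 1, (starRingEnd ℂ) mu, mu;
         1, 1, mu, (starRingEnd ℂ) mu;
         mu, (starRingEnd ℂ) mu, 1, 1;
         (starRingEnd ℂ) mu, mu, 1, 1] a b)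
    (hrel1 : ∀ a b, ψ a * ψ b = lam' a b • (ψ b * ψ a))
    (hrel2 : ∀ a b, ψ a * star (ψ b) = lam' b a • (star (ψ b) * ψ a))
    (hsphere : ∑ a, star (ψ a) * ψ a = 1)
    (Ψ : Matrix (Fin 4) (Fin 2) A)
    (hΨ : Ψ = Matrix.of ![![ψ 0, -star (ψ 1)],
                          ![ψ 1,  star (ψ 0)],
                          ![ψ 2, -star (ψ 3)],
                          ![ψ 3,  star (ψ 2)]]) :
    Ψᴴ * Ψ = 1
    ∧ (Ψ * Ψᴴ) * (Ψ * Ψᴴ) = Ψ * Ψᴴ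
    ∧ (Ψ * Ψᴴ)ᴴ = Ψ * Ψᴴ := by
  have h01 : ψ 0 * ψ 1 = ψ 1 * ψ 0 := by
    have := hrel1 0 1; simpa [hlam'] using this
  have h23 : ψ 2 * ψ 3 = ψ 3 * ψ 2 := by
    have := hrel1 2 3; simpa [hlam'] using this
  have h01' : star (ψ 1) * star (ψ 0) = star (ψ 0) * star (ψ 1) := by
    rw [← star_mul, h01, star_mul]
  have h23' : star (ψ 3) * star (ψ 2) = star (ψ 2) * star (ψ 3) := by
    rw [← star_mul, h23, star_mul]
  have hd : ∀ a : Fin 4, ψ a * star (ψ a) = star (ψ a) * ψ a := by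
    intro a
    have := hrel2 a a
    fin_cases a <;> simpa [hlam', Matrix.vecHead, Matrix.vecTail] using this
  rw [Fin.sum_univ_four] at hsphere
  have key : Ψᴴ * Ψ = 1 := by
    ext i j
    fin_cases i <;> fin_cases j <;>
      simp only [hΨ, Matrix.mul_apply, Fin.sum_univ_four, Matrix.conjTranspose_apply,
        Matrix.of_apply, Matrix.cons_val', Matrix.cons_val_zero, Matrix.cons_val_one,
        Matrix.head_cons, Matrix.empty_val', Matrix.cons_val_fin_one, Matrix.head_fin_const, Matrix.cons_val_two, Matrix.cons_val_three, Matrix.cons_val_succ,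
        Matrix.vecHead, Matrix.vecTail, Function.comp, neg_neg,
        Matrix.one_apply, star_neg, star_star, mul_neg, neg_mul, if_true, if_false,
        Fin.zero_eta, Fin.mk_one, Fin.isValue, hd, eq_self_iff_true, one_ne_zero,
        zero_ne_one, ite_true, ite_false, Fin.one_eq_zero_iff, Fin.zero_eq_one_iff,
        Nat.succ_ne_self]
    · exact hsphere
    · rw [h01', h23']; abel
    · rw [h01, h23]; abel
    · rw [← hsphere]; abel
  refine ⟨key, ?_, by simp [Matrix.conjTranspose_mul]⟩
  calc (Ψ * Ψᴴ) * (Ψ * Ψᴴ) = Ψ * (Ψᴴ * Ψ) * Ψᴴ := by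
        simp [Matrix.mul_assoc]
    _ = Ψ * Ψᴴ := by rw [key]; simp
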